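/- Let (V_n)_{n≥1} be a sequence of finite Borel measures on (0,∞) with 𝓛_{V_n}(0) → ∞. The following are equivalent: (1) (𝓛_{V_n}) has a cutoff; (2) for all ε > 0 and c > 0, T_{V_n}(ε)·λ_{V_n}(c) → ∞; (3) there exists ε > 0 such that T_{V_n}(ε)·λ_{V_n}(c) → ∞ for all c > 0; (4) for all c > 0, τ_{V_n}(c)·λ_{V_n}(c) → ∞; (5) for all c̃ > 0 and c > 0, τ_{V_n}(c̃)·λ_{V_n}(c) → ∞; (6) there exists c̃ > 0 such that τ_{V_n}(c̃)·λ_{V_n}(c) → ∞ for all c > 0. (Since 𝓛_{V_n}(0) → ∞, for each fixed c > 0 the quantities λ_{V_n}(c), τ_{V_n}(c) are defined for all large n, and the limits are understood accordingly.) -/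

import Mathlib

open MeasureTheory Filter Set Topology

/-- The Laplace transform `𝓛_V(t) = ∫_{(0,∞)} e^{-tλ} dV(λ)` of a (finite Borel) measure `V`
on `(0,∞)`. -/
noncomputable def lap (V : Measure ℝ) (t : ℝ) : ℝ :=
  ∫ x in Ioi (0 : ℝ), Real.exp (-t * x) ∂V

/-- `V(λ) = V((0,λ])`, the nondecreasing right-continuous function associated to `V`. -/
noncomputable def cdfV (V : Measure ℝ) (l : ℝ) : ℝ :=
  (V (Ioc 0 l)).toReal

/-- The mixing time `T_V(ε) = min{t ≥ 0 : 𝓛_V(t) ≤ ε}`. -/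
noncomputable def TmixV (V : Measure ℝ) (ε : ℝ) : ℝ :=
  sInf {t : ℝ | 0 ≤ t ∧ lap V t ≤ ε}

/-- `λ_V(c) = inf{λ > 0 : V(λ) > c}`. -/
noncomputable def lamV (V : Measure ℝ) (c : ℝ) : ℝ :=
  sInf {l : ℝ | 0 < l ∧ c < cdfV V l}

/-- `τ_V(c) = sup_{λ ≥ λ_V(c)} log(1 + V(λ))/λ`. -/
noncomputable def tauV (V : Measure ℝ) (c : ℝ) : ℝ :=
  sSup ((fun l => Real.log (1 + cdfV V l) / l) '' Ici (lamV V c))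

/-- `t` is a cutoff time for the sequence of Laplace transforms `(𝓛_{V_n})` (in the regime
`𝓛_{V_n}(0) → ∞`): `𝓛_{V_n}(a t_n) → 0` for `a > 1` and `𝓛_{V_n}(a t_n) → ∞` for `0 < a < 1`. -/
def IsLapCutoffTime (V : ℕ → Measure ℝ) (t : ℕ → ℝ) : Prop :=
  (∀ᶠ n in atTop, 0 < t n) ∧
    (∀ a : ℝ, 1 < a → Tendsto (fun n => lap (V n) (a * t n)) atTop (𝓝 0)) ∧
    (∀ a : ℝ, a ∈ Ioo (0 : ℝ) 1 → Tendsto (fun n => lap (V n) (a * t n)) atTop atTop)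

/-- The sequence of Laplace transforms `(𝓛_{V_n})` has a cutoff. -/
def LapCutoff (V : ℕ → Measure ℝ) : Prop :=
  ∃ t : ℕ → ℝ, IsLapCutoffTime V t

section Aux
variable (V : Measure ℝ) [IsFiniteMeasure V]

lemma cdf_nonneg (l : ℝ) : 0 ≤ cdfV V l := ENNReal.toReal_nonneg

lemma cdf_mono : Monotone (cdfV V) := fun a b hab =>
  ENNReal.toReal_mono (measure_ne_top V _) (measure_mono (Ioc_subset_Ioc_right hab))

lemma cdf_le_mass (l : ℝ) : cdfV V l ≤ (V (Ioi 0)).toReal :=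
  ENNReal.toReal_mono (measure_ne_top V _) (measure_mono Ioc_subset_Ioi_self)

lemma lap_zero : lap V 0 = (V (Ioi 0)).toReal := by
  simp [lap]; rfl

lemma integrableOn_exp {t : ℝ} (ht : 0 ≤ t) {s : Set ℝ} (hs : MeasurableSet s)
    (hs' : s ⊆ Ioi 0) : IntegrableOn (fun x => Real.exp (-t * x)) s V := by
  refine Integrable.mono' (integrable_const 1) ?_ ?_
  · exact (Real.continuous_exp.comp (continuous_const.mul continuous_id)).aestronglyMeasurable
  · filter_upwards [ae_restrict_mem hs] with x hx
    rw [Real.norm_eq_abs, abs_of_pos (Real.exp_pos _)]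
    exact Real.exp_le_one_iff.2 (by nlinarith [hs' hx, mem_Ioi.1 (hs' hx)])

lemma lap_mono {s t : ℝ} (hs : 0 ≤ s) (hst : s ≤ t) : lap V t ≤ lap V s := by
  refine setIntegral_mono_on (integrableOn_exp V (hs.trans hst) measurableSet_Ioi le_rfl)
    (integrableOn_exp V hs measurableSet_Ioi le_rfl) measurableSet_Ioi ?_
  intro x hx
  exact Real.exp_le_exp.2 (by nlinarith [mem_Ioi.1 hx])

lemma lap_nonneg {t : ℝ} : 0 ≤ lap V t :=
  setIntegral_nonneg measurableSet_Ioi (fun x _ => (Real.exp_pos _).le)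

lemma lap_tendsto_zero : Tendsto (lap V) atTop (𝓝 0) := by
  have h0 : (0:ℝ) = ∫ x in Ioi (0:ℝ), (0:ℝ) ∂V := by simp
  rw [h0]
  refine tendsto_integral_filter_of_dominated_convergence (fun _ => 1) ?_ ?_ ?_ ?_
  · exact Eventually.of_forall fun t =>
      (Real.continuous_exp.comp (continuous_const.mul continuous_id)).aestronglyMeasurable
  · filter_upwards [eventually_ge_atTop (0:ℝ)] with t ht
    filter_upwards [ae_restrict_mem measurableSet_Ioi] with x hx
    rw [Real.norm_eq_abs, abs_of_pos (Real.exp_pos _)]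
    exact Real.exp_le_one_iff.2 (by nlinarith [mem_Ioi.1 hx])
  · exact integrable_const 1
  · filter_upwards [ae_restrict_mem measurableSet_Ioi] with x hx
    have : Tendsto (fun t : ℝ => -t * x) atTop atBot := by
      have := (tendsto_neg_atBot_iff (α := ℝ)).2 tendsto_id
      exact Tendsto.atBot_mul_const (mem_Ioi.1 hx) this
    exact Real.tendsto_exp_atBot.comp this

lemma lap_ge {t l : ℝ} (ht : 0 ≤ t) (hl : 0 < l) :
    Real.exp (-t * l) * cdfV V l ≤ lap V t := by
  have hsub : Ioc (0:ℝ) l ⊆ Ioi 0 := Ioc_subset_Ioi_self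
  have h1 : ∫ x in Ioc (0:ℝ) l, Real.exp (-t * l) ∂V ≤ ∫ x in Ioc (0:ℝ) l, Real.exp (-t*x) ∂V := by
    refine setIntegral_mono_on (integrableOn_const (measure_ne_top V _))
      (integrableOn_exp V ht measurableSet_Ioc hsub) measurableSet_Ioc ?_
    intro x hx
    exact Real.exp_le_exp.2 (by nlinarith [hx.1, hx.2])
  have h2 : ∫ x in Ioc (0:ℝ) l, Real.exp (-t*x) ∂V ≤ lap V t := by
    refine setIntegral_mono_set (integrableOn_exp V ht measurableSet_Ioi le_rfl)
      (Eventually.of_forall fun x => (Real.exp_pos _).le) (HasSubset.Subset.eventuallyLE hsub)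
  calc Real.exp (-t * l) * cdfV V l = ∫ x in Ioc (0:ℝ) l, Real.exp (-t * l) ∂V := by
        rw [setIntegral_const]; rw [smul_eq_mul, mul_comm]; rfl
    _ ≤ lap V t := h1.trans h2

lemma cdf_tendsto_mass : Tendsto (fun k : ℕ => cdfV V k) atTop (𝓝 ((V (Ioi 0)).toReal)) := by
  have hU : ⋃ k : ℕ, Ioc (0:ℝ) k = Ioi 0 := by
    ext x
    simp only [mem_iUnion, mem_Ioc, mem_Ioi]
    constructor
    · rintro ⟨k, hk, _⟩; exact hk
    · intro hx; obtain ⟨k, hk⟩ := exists_nat_ge x; exact ⟨k, hx, hk⟩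
  have hmono : Monotone (fun k : ℕ => Ioc (0:ℝ) k) := fun a b hab =>
    Ioc_subset_Ioc_right (Nat.cast_le.2 hab)
  have := tendsto_measure_iUnion_atTop (μ := V) hmono
  rw [hU] at this
  exact (ENNReal.tendsto_toReal (measure_ne_top V _)).comp this


lemma one_div_anti : Antitone (fun k : ℕ => 1/((k:ℝ)+1)) := by
  intro a b hab
  apply one_div_le_one_div_of_le (by positivity)
  have : (a:ℝ) ≤ b := Nat.cast_le.2 hab
  linarith

lemma cdf_tendsto_zero : Tendsto (fun k : ℕ => cdfV V (1/(k+1))) atTop (𝓝 0) := by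
  have hI : ⋂ k : ℕ, Ioc (0:ℝ) (1/(k+1)) = ∅ := by
    ext x
    simp only [mem_iInter, mem_Ioc, mem_empty_iff_false, iff_false, not_forall]
    by_cases hx : 0 < x
    · obtain ⟨k, hk⟩ := exists_nat_gt (1/x)
      refine ⟨k, fun h => ?_⟩
      have hk1 : 1/x < k + 1 := hk.trans (by linarith)
      have := h.2
      rw [div_lt_iff₀ hx] at hk1
      rw [le_div_iff₀ (by positivity)] at this
      nlinarith
    · exact ⟨0, fun h => hx h.1⟩
  have h := tendsto_measure_iInter_atTop (μ := V)
    (s := fun k : ℕ => Ioc (0:ℝ) (1/(k+1)))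
    (fun k => (measurableSet_Ioc).nullMeasurableSet)
    (fun a b hab => Ioc_subset_Ioc_right (one_div_anti hab))
    ⟨0, measure_ne_top V _⟩
  rw [hI] at h
  simp only [measure_empty] at h
  have := (ENNReal.tendsto_toReal (by simp)).comp h
  simpa [cdfV, Function.comp_def] using this

lemma cdf_right_cont (l : ℝ) :
    Tendsto (fun k : ℕ => cdfV V (l + 1/(k+1))) atTop (𝓝 (cdfV V l)) := by
  have hI : ⋂ k : ℕ, Ioc (0:ℝ) (l + 1/(k+1)) = Ioc 0 l := by
    ext x
    simp only [mem_iInter, mem_Ioc]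
    constructor
    · intro h
      refine ⟨(h 0).1, ?_⟩
      by_contra hx
      push_neg at hx
      obtain ⟨k, hk⟩ := exists_nat_gt (1/(x - l))
      have hxl : 0 < x - l := by linarith
      have h2 := (h k).2
      have hk1 : 1/(x-l) < k + 1 := hk.trans (by linarith)
      rw [div_lt_iff₀ hxl] at hk1
      have : 1/((k:ℝ)+1) < x - l := by
        rw [div_lt_iff₀ (by positivity)]
        nlinarith
      linarith
    · intro h
      exact fun k => ⟨h.1, h.2.trans (le_add_of_nonneg_right (by positivity))⟩
  have h := tendsto_measure_iInter_atTop (μ := V)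
    (s := fun k : ℕ => Ioc (0:ℝ) (l + 1/(k+1)))
    (fun k => (measurableSet_Ioc).nullMeasurableSet)
    (fun a b hab => Ioc_subset_Ioc_right (by linarith [one_div_anti hab]))
    ⟨0, measure_ne_top V _⟩
  rw [hI] at h
  exact (ENNReal.tendsto_toReal (measure_ne_top V _)).comp h

end Aux

section Aux2
variable (V : Measure ℝ) [IsFiniteMeasure V] {c : ℝ}

lemma lam_bddBelow (c : ℝ) : BddBelow {l : ℝ | 0 < l ∧ c < cdfV V l} :=
  ⟨0, fun l hl => hl.1.le⟩

lemma lam_set_nonempty (hM : c < (V (Ioi 0)).toReal) :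
    {l : ℝ | 0 < l ∧ c < cdfV V l}.Nonempty := by
  have := (cdf_tendsto_mass V).eventually (eventually_gt_nhds hM)
  rw [eventually_atTop] at this
  obtain ⟨k, hk⟩ := this
  exact ⟨(k:ℝ) + 1, by positivity, lt_of_lt_of_le (hk (k+1) (by omega)) (by exact_mod_cast le_rfl)⟩

lemma lam_pos (hc : 0 < c) (hM : c < (V (Ioi 0)).toReal) : 0 < lamV V c := by
  have := (cdf_tendsto_zero V).eventually (eventually_lt_nhds hc)
  rw [eventually_atTop] at this
  obtain ⟨k, hk⟩ := this
  have hlb : ∀ l ∈ {l : ℝ | 0 < l ∧ c < cdfV V l}, 1/((k:ℝ)+1) ≤ l := by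
    intro l hl
    by_contra hless
    push_neg at hless
    exact absurd (lt_of_lt_of_le hl.2 (cdf_mono V hless.le)) (not_lt.2 (hk k le_rfl).le)
  exact lt_of_lt_of_le (by positivity) (le_csInf (lam_set_nonempty V hM) hlb)

lemma cdf_le_of_lt_lam (hc : 0 ≤ c) {x : ℝ} (hx : x < lamV V c) : cdfV V x ≤ c := by
  by_contra h
  push_neg at h
  rcases le_or_gt x 0 with h0 | h0
  · have : cdfV V x = 0 := by
      unfold cdfV
      rw [Ioc_eq_empty (by linarith)]
      simp
    rw [this] at h
    linarith
  · exact absurd (csInf_le (lam_bddBelow V c) ⟨h0, h⟩) (not_le.2 hx)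

lemma exists_mem_lt_lam_add (hM : c < (V (Ioi 0)).toReal) {δ : ℝ} (hδ : 0 < δ) :
    ∃ l, (0 < l ∧ c < cdfV V l) ∧ l < lamV V c + δ := by
  have := (csInf_lt_iff (lam_bddBelow V c) (lam_set_nonempty V hM)).1
    (lt_add_of_pos_right _ hδ)
  obtain ⟨l, hl, hl2⟩ := this
  exact ⟨l, hl, hl2⟩

lemma cdf_lam_ge (hM : c < (V (Ioi 0)).toReal) : c ≤ cdfV V (lamV V c) := by
  have key : ∀ k : ℕ, c ≤ cdfV V (lamV V c + 1/(k+1)) := by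
    intro k
    obtain ⟨l, hl, hl2⟩ := exists_mem_lt_lam_add V hM (by positivity : (0:ℝ) < 1/(k+1))
    exact hl.2.le.trans (cdf_mono V hl2.le)
  exact ge_of_tendsto (cdf_right_cont V (lamV V c)) (Eventually.of_forall key)

lemma lam_mono {c₀ c₁ : ℝ} (h : c₀ ≤ c₁) (hM : c₁ < (V (Ioi 0)).toReal) :
    lamV V c₀ ≤ lamV V c₁ := by
  refine csInf_le_csInf (lam_bddBelow V c₀) (lam_set_nonempty V hM) ?_
  intro l hl
  exact ⟨hl.1, lt_of_le_of_lt h hl.2⟩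

-- tauV lemmas
lemma tau_bddAbove (hc : 0 < c) (hM : c < (V (Ioi 0)).toReal) :
    BddAbove ((fun l => Real.log (1 + cdfV V l) / l) '' Ici (lamV V c)) := by
  refine ⟨Real.log (1 + (V (Ioi 0)).toReal) / lamV V c, ?_⟩
  rintro y ⟨l, hl, rfl⟩
  have hlam := lam_pos V hc hM
  have hl0 : 0 < l := lt_of_lt_of_le hlam hl
  have hnum : Real.log (1 + cdfV V l) ≤ Real.log (1 + (V (Ioi 0)).toReal) :=
    Real.log_le_log (by linarith [cdf_nonneg V l]) (by linarith [cdf_le_mass V l])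
  have hnum0 : 0 ≤ Real.log (1 + (V (Ioi 0)).toReal) :=
    Real.log_nonneg (by linarith [cdf_nonneg V l, cdf_le_mass V l])
  exact div_le_div₀ hnum0 hnum hlam hl


lemma tau_image_nonempty (c : ℝ) :
    ((fun l => Real.log (1 + cdfV V l) / l) '' Ici (lamV V c)).Nonempty :=
  ⟨_, mem_image_of_mem _ (self_mem_Ici (a := lamV V c))⟩

lemma tau_ge_log (hc : 0 < c) (hM : c < (V (Ioi 0)).toReal) :
    Real.log (1 + c) / lamV V c ≤ tauV V c := by
  have hlam := lam_pos V hc hM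
  have h1 : Real.log (1 + cdfV V (lamV V c)) / lamV V c ≤ tauV V c :=
    le_csSup (tau_bddAbove V hc hM) (mem_image_of_mem _ (self_mem_Ici (a := lamV V c)))
  refine le_trans ?_ h1
  have := cdf_lam_ge V hM
  have h2 : Real.log (1 + c) ≤ Real.log (1 + cdfV V (lamV V c)) :=
    Real.log_le_log (by linarith) (by linarith)
  exact (div_le_div_iff_of_pos_right hlam).2 h2

lemma tau_pos (hc : 0 < c) (hM : c < (V (Ioi 0)).toReal) : 0 < tauV V c := by
  have := tau_ge_log V hc hM
  have hlam := lam_pos V hc hM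
  have hlog : 0 < Real.log (1 + c) := Real.log_pos (by linarith)
  exact lt_of_lt_of_le (by positivity) this

lemma cdf_le_exp (hc : 0 < c) (hM : c < (V (Ioi 0)).toReal) {x : ℝ} (hx : lamV V c ≤ x) :
    cdfV V x ≤ Real.exp (tauV V c * x) - 1 := by
  have hx0 : 0 < x := lt_of_lt_of_le (lam_pos V hc hM) hx
  have h1 : Real.log (1 + cdfV V x) / x ≤ tauV V c :=
    le_csSup (tau_bddAbove V hc hM) (mem_image_of_mem _ hx)
  have h2 : Real.log (1 + cdfV V x) ≤ tauV V c * x := by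
    rw [div_le_iff₀ hx0] at h1
    linarith
  have h3 : 1 + cdfV V x ≤ Real.exp (tauV V c * x) := by
    have hpos : 0 < 1 + cdfV V x := by linarith [cdf_nonneg V x]
    rw [← Real.exp_log hpos]
    exact Real.exp_le_exp.2 h2
  linarith

lemma tau_exists (c : ℝ) {d : ℝ} (hd : 0 < d) :
    ∃ l, lamV V c ≤ l ∧ tauV V c - d < Real.log (1 + cdfV V l) / l := by
  obtain ⟨y, ⟨l, hl, rfl⟩, hy⟩ :=
    exists_lt_of_lt_csSup (tau_image_nonempty V c) (sub_lt_self _ hd)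
  exact ⟨l, hl, hy⟩

lemma tau_anti {c₀ c₁ : ℝ} (hc₀ : 0 < c₀) (h : c₀ ≤ c₁) (hM : c₁ < (V (Ioi 0)).toReal) :
    tauV V c₁ ≤ tauV V c₀ := by
  refine csSup_le_csSup (tau_bddAbove V hc₀ (lt_of_le_of_lt h hM)) (tau_image_nonempty V c₁) ?_
  exact image_mono (Ici_subset_Ici.2 (lam_mono V h hM))

lemma tau_stability {c₀ c₁ : ℝ} (hc₀ : 0 < c₀) (h : c₀ ≤ c₁) (hM : c₁ < (V (Ioi 0)).toReal)
    (hbig : Real.log (1 + c₁) < tauV V c₀ * lamV V c₀) : tauV V c₀ ≤ tauV V c₁ := by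
  have hc₁ : 0 < c₁ := lt_of_lt_of_le hc₀ h
  have hM₀ : c₀ < (V (Ioi 0)).toReal := lt_of_le_of_lt h hM
  have hlam₀ := lam_pos V hc₀ hM₀
  have hA : Real.log (1 + c₁) / lamV V c₀ < tauV V c₀ := (div_lt_iff₀ hlam₀).2 hbig
  have hub : ∀ y ∈ (fun l => Real.log (1 + cdfV V l) / l) '' Ici (lamV V c₀),
      y ≤ max (Real.log (1 + c₁) / lamV V c₀) (tauV V c₁) := by
    rintro y ⟨l, hl, rfl⟩
    rcases lt_or_ge l (lamV V c₁) with hcase | hcase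
    · have hcdf : cdfV V l ≤ c₁ := cdf_le_of_lt_lam V hc₁.le hcase
      have hl0 : 0 < l := lt_of_lt_of_le hlam₀ hl
      have hnum : Real.log (1 + cdfV V l) ≤ Real.log (1 + c₁) :=
        Real.log_le_log (by linarith [cdf_nonneg V l]) (by linarith)
      have hnum0 : 0 ≤ Real.log (1 + c₁) := Real.log_nonneg (by linarith)
      exact le_trans (div_le_div₀ hnum0 hnum hlam₀ hl) (le_max_left _ _)
    · exact le_trans (le_csSup (tau_bddAbove V hc₁ hM) (mem_image_of_mem _ hcase))
        (le_max_right _ _)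
  have hle : tauV V c₀ ≤ max (Real.log (1 + c₁) / lamV V c₀) (tauV V c₁) :=
    csSup_le (tau_image_nonempty V c₀) hub
  rcases max_cases (Real.log (1 + c₁) / lamV V c₀) (tauV V c₁) with ⟨heq, _⟩ | ⟨heq, _⟩
  · rw [heq] at hle; linarith
  · rw [heq] at hle; exact hle


lemma lap_upper {c τ lam h t : ℝ} (hc : 0 ≤ c) (hlam : 0 < lam)
    (hh : 0 < h) (ht0 : 0 ≤ t) (hτt : τ < t)
    (hbelow : ∀ x, x < lam → cdfV V x ≤ c)
    (habove : ∀ x, lam ≤ x → cdfV V x ≤ Real.exp (τ * x) - 1) :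
    lap V t ≤ c + Real.exp (τ * h) * Real.exp (-(t - τ) * lam) /
      (1 - Real.exp (-(t - τ) * h)) := by
  have hIoo : Ioo (0:ℝ) lam ⊆ Ioi 0 := Ioo_subset_Ioi_self
  have hIci : Ici lam ⊆ Ioi (0:ℝ) := fun x hx => lt_of_lt_of_le hlam hx
  have hsplit : Ioo (0:ℝ) lam ∪ Ici lam = Ioi 0 := Ioo_union_Ici_eq_Ioi hlam
  have hintOoo : IntegrableOn (fun x => Real.exp (-t * x)) (Ioo 0 lam) V :=
    integrableOn_exp V ht0 measurableSet_Ioo hIoo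
  have hintIci : IntegrableOn (fun x => Real.exp (-t * x)) (Ici lam) V :=
    integrableOn_exp V ht0 measurableSet_Ici hIci
  have hdecomp : lap V t = (∫ x in Ioo (0:ℝ) lam, Real.exp (-t*x) ∂V)
      + ∫ x in Ici lam, Real.exp (-t*x) ∂V := by
    rw [lap, ← hsplit]
    exact setIntegral_union (disjoint_left.2 fun x hx hx' => absurd hx.2 (not_lt.2 hx'))
      measurableSet_Ici hintOoo hintIci
  -- part A
  have hA : (∫ x in Ioo (0:ℝ) lam, Real.exp (-t*x) ∂V) ≤ c := by
    have h1 : (∫ x in Ioo (0:ℝ) lam, Real.exp (-t*x) ∂V) ≤ (V (Ioo 0 lam)).toReal := by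
      have := setIntegral_mono_on hintOoo (integrableOn_const (measure_ne_top V _))
        measurableSet_Ioo (g := fun _ => (1:ℝ)) (fun x hx =>
          Real.exp_le_one_iff.2 (by nlinarith [hx.1]))
      simpa [setIntegral_const, measureReal_def] using this
    refine h1.trans ?_
    have hU : Ioo (0:ℝ) lam = ⋃ k : ℕ, Ioc 0 (lam - lam/(k+2)) := by
      ext x
      simp only [mem_iUnion, mem_Ioo, mem_Ioc]
      constructor
      · rintro ⟨hx0, hxl⟩
        obtain ⟨k, hk⟩ := exists_nat_gt (lam/(lam - x))
        refine ⟨k, hx0, ?_⟩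
        have hlx : 0 < lam - x := by linarith
        rw [div_lt_iff₀ hlx] at hk
        have hk2 : lam / ((k:ℝ)+2) ≤ lam - x := by
          rw [div_le_iff₀ (by positivity)]
          nlinarith
        linarith
      · rintro ⟨k, hx0, hxk⟩
        have : lam / ((k:ℝ)+2) > 0 := by positivity
        exact ⟨hx0, by linarith⟩
    have hmono : Monotone (fun k : ℕ => Ioc (0:ℝ) (lam - lam/(k+2))) := by
      intro a b hab
      apply Ioc_subset_Ioc_right
      have h1 : lam / ((b:ℝ)+2) ≤ lam / ((a:ℝ)+2) := by
        apply div_le_div_of_nonneg_left hlam.le (by positivity)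
        have : (a:ℝ) ≤ b := Nat.cast_le.2 hab
        linarith
      linarith
    have hmeas : V (Ioo (0:ℝ) lam) ≤ ENNReal.ofReal c := by
      rw [hU, hmono.directed_le.measure_iUnion]
      refine iSup_le fun k => ?_
      have hcdf : cdfV V (lam - lam/(k+2)) ≤ c := by
        apply hbelow
        have : lam / ((k:ℝ)+2) > 0 := by positivity
        linarith
      exact ENNReal.le_ofReal_iff_toReal_le (measure_ne_top V _) hc |>.2 hcdf
    exact ENNReal.toReal_le_of_le_ofReal hc hmeas
  -- part B
  set r : ℝ := Real.exp (-(t - τ) * h) with hr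
  have hr0 : 0 ≤ r := (Real.exp_pos _).le
  have hr1 : r < 1 := Real.exp_lt_one_iff.2 (by nlinarith)
  set C : ℝ := Real.exp (τ * h) * Real.exp (-(t - τ) * lam) with hC
  have hC0 : 0 ≤ C := by positivity
  set s : ℕ → Set ℝ := fun k => Ico (lam + k*h) (lam + (k+1)*h) with hs
  have hcover : Ici lam = ⋃ k, s k := by
    ext x
    simp only [mem_iUnion, mem_Ici, hs, mem_Ico]
    constructor
    · intro hx
      refine ⟨⌊(x - lam)/h⌋₊, ?_, ?_⟩
      · have := Nat.floor_le (a := (x - lam)/h) (div_nonneg (by linarith : (0:ℝ) ≤ x - lam) hh.le)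
        rw [le_div_iff₀ hh] at this
        linarith
      · have := Nat.lt_floor_add_one ((x - lam)/h)
        rw [div_lt_iff₀ hh] at this
        linarith
    · rintro ⟨k, hk1, _⟩
      have : (0:ℝ) ≤ k*h := by positivity
      linarith
  have hdisj : Pairwise (Function.onFun Disjoint s) := by
    have key : ∀ i j : ℕ, i < j → Disjoint (s i) (s j) := by
      intro i j hij
      refine disjoint_left.2 fun x hxi hxj => ?_
      simp only [hs, mem_Ico] at hxi hxj
      have : ((i:ℝ)+1) ≤ j := by exact_mod_cast hij
      nlinarith [hxi.2, hxj.1]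
    intro i j hij
    rcases hij.lt_or_gt with h' | h'
    · exact key i j h'
    · exact (key j i h').symm
  have hsub : ∀ k, s k ⊆ Ioi (0:ℝ) := fun k x hx =>
    lt_of_lt_of_le hlam (le_trans (le_add_of_nonneg_right (by positivity)) hx.1)
  have hint : ∀ k, IntegrableOn (fun x => Real.exp (-t * x)) (s k) V := fun k =>
    integrableOn_exp V ht0 measurableSet_Ico (hsub k)
  have hBsum : (∫ x in Ici lam, Real.exp (-t*x) ∂V) = ∑' k, ∫ x in s k, Real.exp (-t*x) ∂V := by
    rw [hcover]
    exact integral_iUnion (fun k => measurableSet_Ico) hdisj (by rw [← hcover]; exact hintIci)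
  have hterm : ∀ k : ℕ, (∫ x in s k, Real.exp (-t*x) ∂V) ≤ C * r^k := by
    intro k
    have hak : lam ≤ lam + (k:ℝ)*h := le_add_of_nonneg_right (by positivity)
    have h1 : (∫ x in s k, Real.exp (-t*x) ∂V)
        ≤ (V (s k)).toReal * Real.exp (-t * (lam + k*h)) := by
      have := setIntegral_mono_on (hint k) (integrableOn_const (measure_ne_top V _))
        measurableSet_Ico (g := fun _ => Real.exp (-t * (lam + k*h))) (fun x hx =>
          Real.exp_le_exp.2 (by nlinarith [hx.1]))
      simpa [setIntegral_const, smul_eq_mul, measureReal_def] using this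
    have h2 : (V (s k)).toReal ≤ Real.exp (τ * (lam + ((k:ℝ)+1)*h)) := by
      have hsub2 : s k ⊆ Ioc 0 (lam + ((k:ℝ)+1)*h) := by
        intro x hx
        exact ⟨hsub k hx, hx.2.le⟩
      have := ENNReal.toReal_mono (measure_ne_top V _) (measure_mono hsub2)
      refine this.trans ?_
      have := habove (lam + ((k:ℝ)+1)*h) (le_add_of_nonneg_right (by positivity))
      have hexp := Real.exp_pos (τ * (lam + ((k:ℝ)+1)*h))
      unfold cdfV at this
      linarith
    have h3 : (V (s k)).toReal * Real.exp (-t * (lam + k*h))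
        ≤ Real.exp (τ * (lam + ((k:ℝ)+1)*h)) * Real.exp (-t * (lam + k*h)) := by
      exact mul_le_mul_of_nonneg_right h2 (Real.exp_pos _).le
    have h4 : Real.exp (τ * (lam + ((k:ℝ)+1)*h)) * Real.exp (-t * (lam + k*h)) = C * r^k := by
      rw [hC, hr, ← Real.exp_nat_mul, ← Real.exp_add, ← Real.exp_add, ← Real.exp_add]
      ring_nf
    linarith
  have hgsum : Summable (fun k : ℕ => C * r^k) :=
    (summable_geometric_of_lt_one hr0 hr1).mul_left C
  have htermsum : Summable (fun k : ℕ => ∫ x in s k, Real.exp (-t*x) ∂V) :=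
    Summable.of_nonneg_of_le
      (fun k => setIntegral_nonneg measurableSet_Ico (fun x _ => (Real.exp_pos _).le))
      hterm hgsum
  have hB : (∫ x in Ici lam, Real.exp (-t*x) ∂V) ≤ C * (1 - r)⁻¹ := by
    rw [hBsum]
    calc (∑' k, ∫ x in s k, Real.exp (-t*x) ∂V) ≤ ∑' k, C * r^k :=
          Summable.tsum_le_tsum hterm htermsum hgsum
      _ = C * (1 - r)⁻¹ := by rw [tsum_mul_left, tsum_geometric_of_lt_one hr0 hr1]
  have : C * (1 - r)⁻¹ = Real.exp (τ * h) * Real.exp (-(t - τ) * lam) / (1 - r) := by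
    rw [hC, div_eq_mul_inv]
  linarith [hdecomp, hA, hB, this]


lemma lap_upper_mul {a : ℝ} (hc : 0 < c) (hM : c < (V (Ioi 0)).toReal) (ha : 1 < a) :
    lap V (a * tauV V c) ≤ c + Real.exp (-((a-1)/2) * (tauV V c * lamV V c)) /
      (1 - Real.exp (-((a-1)^2/2) * (tauV V c * lamV V c))) := by
  have hlam := lam_pos V hc hM
  have htau := tau_pos V hc hM
  have key := lap_upper V (c := c) (τ := tauV V c) (lam := lamV V c)
    (h := ((a-1)/2) * lamV V c) (t := a * tauV V c) hc.le hlam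
    (by nlinarith) (by nlinarith) (by nlinarith)
    (fun x hx => cdf_le_of_lt_lam V hc.le hx)
    (fun x hx => cdf_le_exp V hc hM hx)
  have e1 : Real.exp (tauV V c * (((a-1)/2) * lamV V c)) *
      Real.exp (-(a * tauV V c - tauV V c) * lamV V c)
      = Real.exp (-((a-1)/2) * (tauV V c * lamV V c)) := by
    rw [← Real.exp_add]; ring_nf
  have e2 : (-(a * tauV V c - tauV V c) * (((a-1)/2) * lamV V c))
      = -((a-1)^2/2) * (tauV V c * lamV V c) := by ring
  rw [e1, e2] at key
  exact key

lemma lap_upper_shift (hc : 0 < c) (hM : c < (V (Ioi 0)).toReal) {u : ℝ} (hu : 0 < u) :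
    lap V (tauV V c + u / lamV V c) ≤ c + Real.exp (tauV V c * lamV V c - u) /
      (1 - Real.exp (-u)) := by
  have hlam := lam_pos V hc hM
  have htau := tau_pos V hc hM
  have key := lap_upper V (c := c) (τ := tauV V c) (lam := lamV V c)
    (h := lamV V c) (t := tauV V c + u / lamV V c) hc.le hlam hlam
    (by nlinarith [div_pos hu hlam]) (lt_add_of_pos_right _ (div_pos hu hlam))
    (fun x hx => cdf_le_of_lt_lam V hc.le hx)
    (fun x hx => cdf_le_exp V hc hM hx)
  have e2 : (-(tauV V c + u / lamV V c - tauV V c) * lamV V c) = -u := by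
    field_simp
    ring
  rw [e2] at key
  rw [show tauV V c * lamV V c - u = tauV V c * lamV V c + -u by ring, Real.exp_add]
  exact key

lemma lap_lower_tau (hc : 0 < c) (hM : c < (V (Ioi 0)).toReal) {a : ℝ}
    (ha : 0 < a) (ha1 : a < 1) :
    Real.exp (((1-a)/2) * (tauV V c * lamV V c)) - 1 ≤ lap V (a * tauV V c) := by
  have hlam := lam_pos V hc hM
  have htau := tau_pos V hc hM
  set d : ℝ := (1-a)/2 with hd
  have hd0 : 0 < d := by rw [hd]; linarith
  obtain ⟨l, hl, hl2⟩ := tau_exists V c (d := d * tauV V c) (by nlinarith)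
  have hl0 : 0 < l := lt_of_lt_of_le hlam hl
  have hcdf : Real.exp ((1-d) * tauV V c * l) - 1 < cdfV V l := by
    have h2 : (tauV V c - d * tauV V c) * l < Real.log (1 + cdfV V l) :=
      (lt_div_iff₀ hl0).1 hl2
    have h3 : Real.exp ((1-d) * tauV V c * l) < 1 + cdfV V l := by
      have hpos : (0:ℝ) < 1 + cdfV V l := by linarith [cdf_nonneg V l]
      rw [← Real.exp_log hpos]
      apply Real.exp_lt_exp.2
      calc (1-d) * tauV V c * l = (tauV V c - d * tauV V c) * l := by ring
        _ < _ := h2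
    linarith
  have hge := lap_ge V (t := a * tauV V c) (l := l) (by nlinarith) hl0
  have hstep : Real.exp (d * (tauV V c * lamV V c)) - 1
      ≤ Real.exp (-(a * tauV V c) * l) * cdfV V l := by
    have h5 : Real.exp (-(a * tauV V c) * l) * (Real.exp ((1-d) * tauV V c * l) - 1)
        ≤ Real.exp (-(a * tauV V c) * l) * cdfV V l :=
      mul_le_mul_of_nonneg_left hcdf.le (Real.exp_pos _).le
    refine le_trans ?_ h5
    have h6 : Real.exp (-(a * tauV V c) * l) * (Real.exp ((1-d) * tauV V c * l) - 1)
        = Real.exp (d * (tauV V c * l)) - Real.exp (-(a * tauV V c) * l) := by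
      rw [mul_sub, ← Real.exp_add, mul_one]
      congr 2
      rw [hd]; ring
    rw [h6]
    have h7 : Real.exp (d * (tauV V c * lamV V c)) ≤ Real.exp (d * (tauV V c * l)) := by
      apply Real.exp_le_exp.2
      have : tauV V c * lamV V c ≤ tauV V c * l := mul_le_mul_of_nonneg_left hl htau.le
      nlinarith
    have h8 : Real.exp (-(a * tauV V c) * l) ≤ 1 :=
      Real.exp_le_one_iff.2 (by nlinarith [mul_pos (mul_pos ha htau) hl0])
    linarith
  calc Real.exp (((1-a)/2) * (tauV V c * lamV V c)) - 1
      = Real.exp (d * (tauV V c * lamV V c)) - 1 := by rw [hd]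
    _ ≤ Real.exp (-(a * tauV V c) * l) * cdfV V l := hstep
    _ ≤ lap V (a * tauV V c) := hge

lemma lap_lower_lam (hc : 0 < c) (hM : c < (V (Ioi 0)).toReal) {t : ℝ} (ht : 0 ≤ t) :
    c * Real.exp (-t * (2 * lamV V c)) ≤ lap V t := by
  have hlam := lam_pos V hc hM
  obtain ⟨l, ⟨hl0, hlc⟩, hl2⟩ := exists_mem_lt_lam_add V hM hlam
  refine le_trans ?_ (lap_ge V ht hl0)
  have h1 : Real.exp (-t * (2 * lamV V c)) ≤ Real.exp (-t * l) :=
    Real.exp_le_exp.2 (by nlinarith)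
  have := cdf_nonneg V l
  nlinarith [Real.exp_pos (-t * (2 * lamV V c))]

lemma Tmix_le {ε t : ℝ} (ht : 0 ≤ t) (hlap : lap V t ≤ ε) : TmixV V ε ≤ t :=
  csInf_le ⟨0, fun _ hs => hs.1⟩ ⟨ht, hlap⟩

lemma le_Tmix {ε t : ℝ} (hε : 0 < ε) (hlap : ε < lap V t) : t ≤ TmixV V ε := by
  have hne : {u : ℝ | 0 ≤ u ∧ lap V u ≤ ε}.Nonempty := by
    have := (lap_tendsto_zero V).eventually (eventually_lt_nhds hε)
    rw [eventually_atTop] at this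
    obtain ⟨u, hu⟩ := this
    exact ⟨max u 0, le_max_right _ _, (hu _ (le_max_left _ _)).le⟩
  refine le_csInf hne fun u hu => ?_
  by_contra hlt
  push_neg at hlt
  exact absurd (lt_of_lt_of_le hlap (lap_mono V hu.1 hlt.le)) (not_lt.2 hu.2)

lemma Tmix_nonneg (ε : ℝ) (hε : 0 < ε) : 0 ≤ TmixV V ε := by
  have hne : {u : ℝ | 0 ≤ u ∧ lap V u ≤ ε}.Nonempty := by
    have := (lap_tendsto_zero V).eventually (eventually_lt_nhds hε)
    rw [eventually_atTop] at this
    obtain ⟨u, hu⟩ := this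
    exact ⟨max u 0, le_max_right _ _, (hu _ (le_max_left _ _)).le⟩
  exact le_csInf hne fun u hu => hu.1

end Aux2


section Seq
variable {W : ℕ → Measure ℝ} [∀ n, IsFiniteMeasure (W n)]
variable (hdiv : Tendsto (fun n => lap (W n) 0) atTop atTop)

include hdiv in
lemma hmass (C : ℝ) : ∀ᶠ n in atTop, C < (W n (Ioi 0)).toReal := by
  have := tendsto_atTop.1 hdiv (C + 1)
  filter_upwards [this] with n hn
  rw [lap_zero] at hn
  linarith

include hdiv in
lemma imp12 (h : LapCutoff W) :
    ∀ ε > (0 : ℝ), ∀ c > (0 : ℝ),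
      Tendsto (fun n => TmixV (W n) ε * lamV (W n) c) atTop atTop := by
  obtain ⟨t, ht0, hgt, hlt⟩ := h
  intro ε hε c hc
  have h2t : Tendsto (fun n => lap (W n) (2 * t n)) atTop (𝓝 0) := hgt 2 one_lt_two
  have hkey : Tendsto (fun n => t n * lamV (W n) c) atTop atTop := by
    rw [tendsto_atTop]
    intro b
    have hthr : (0:ℝ) < c * Real.exp (-(4 * b)) := by positivity
    filter_upwards [h2t.eventually (eventually_lt_nhds hthr), ht0, hmass hdiv c]
      with n h1 h2 h3
    have hlo := lap_lower_lam (W n) hc h3 (t := 2 * t n) (by linarith)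
    have hexp : Real.exp (-(2 * t n) * (2 * lamV (W n) c)) < Real.exp (-(4 * b)) := by
      by_contra hcon
      push_neg at hcon
      have : c * Real.exp (-(4 * b)) ≤ c * Real.exp (-(2 * t n) * (2 * lamV (W n) c)) :=
        mul_le_mul_of_nonneg_left hcon hc.le
      linarith
    have := Real.exp_lt_exp.1 hexp
    nlinarith
  rw [tendsto_atTop]
  intro b
  have hinf := hlt (1/2) ⟨by norm_num, by norm_num⟩
  filter_upwards [hinf.eventually_gt_atTop ε, tendsto_atTop.1 hkey (2 * |b|), ht0,
    hmass hdiv c] with n h1 h2 h3 h4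
  have hT : (1/2) * t n ≤ TmixV (W n) ε := le_Tmix (W n) hε h1
  have hlam : 0 < lamV (W n) c := lam_pos (W n) hc h4
  have : (1/2) * t n * lamV (W n) c ≤ TmixV (W n) ε * lamV (W n) c :=
    mul_le_mul_of_nonneg_right hT hlam.le
  have hb : b ≤ |b| := le_abs_self b
  nlinarith

lemma imp23 (h : ∀ ε > (0 : ℝ), ∀ c > (0 : ℝ),
      Tendsto (fun n => TmixV (W n) ε * lamV (W n) c) atTop atTop) :
    ∃ ε > (0 : ℝ), ∀ c > (0 : ℝ),
      Tendsto (fun n => TmixV (W n) ε * lamV (W n) c) atTop atTop :=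
  ⟨1, one_pos, h 1 one_pos⟩

lemma imp56 (h : ∀ c' > (0 : ℝ), ∀ c > (0 : ℝ),
      Tendsto (fun n => tauV (W n) c' * lamV (W n) c) atTop atTop) :
    ∃ c' > (0 : ℝ), ∀ c > (0 : ℝ),
      Tendsto (fun n => tauV (W n) c' * lamV (W n) c) atTop atTop :=
  ⟨1, one_pos, h 1 one_pos⟩


include hdiv in
lemma imp34 (h : ∃ ε > (0 : ℝ), ∀ c > (0 : ℝ),
      Tendsto (fun n => TmixV (W n) ε * lamV (W n) c) atTop atTop) :
    ∀ c > (0 : ℝ), Tendsto (fun n => tauV (W n) c * lamV (W n) c) atTop atTop := by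
  obtain ⟨ε, hε, hyp⟩ := h
  intro c hc
  rw [tendsto_atTop]
  intro K0
  set c' : ℝ := min c ε / 2 with hc'def
  have hc' : 0 < c' := by rw [hc'def]; positivity
  have hc'c : c' ≤ c := by
    rw [hc'def]
    have := min_le_left c ε
    linarith [lt_min_iff.1 (lt_min_iff.2 ⟨hc, hε⟩)]
  have hc'ε : c' ≤ ε / 2 := by
    rw [hc'def]
    have := min_le_right c ε
    linarith
  set K : ℝ := max K0 (Real.log (1 + c) + 1) with hKdef
  have hKK0 : K0 ≤ K := le_max_left _ _
  have hKlog : Real.log (1 + c) + 1 ≤ K := le_max_right _ _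
  have hlogpos : 0 < Real.log (1 + c) := Real.log_pos (by linarith)
  have hK1 : 1 < K := by linarith
  set m : ℝ := max 0 (Real.log (4 / ε)) with hmdef
  have hm0 : 0 ≤ m := le_max_left _ _
  have hmlog : Real.log (4 / ε) ≤ m := le_max_right _ _
  set u : ℝ := K + m + 1 with hudef
  have hu1 : 1 ≤ u := by nlinarith
  filter_upwards [tendsto_atTop.1 (hyp c' hc') (K + u + 1), hmass hdiv c, hmass hdiv c']
    with n hn hMc hMc'
  by_contra hcon
  push_neg at hcon
  have hconK : tauV (W n) c * lamV (W n) c < K := lt_of_lt_of_le hcon hKK0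
  have hlam' : 0 < lamV (W n) c' := lam_pos (W n) hc' hMc'
  have htau' : 0 < tauV (W n) c' := tau_pos (W n) hc' hMc'
  have htauc : 0 < tauV (W n) c := tau_pos (W n) hc hMc
  have hlamc : 0 < lamV (W n) c := lam_pos (W n) hc hMc
  -- Step 1: P' ≤ K
  have hP' : tauV (W n) c' * lamV (W n) c' ≤ K := by
    rcases le_or_gt (tauV (W n) c' * lamV (W n) c') (Real.log (1 + c)) with hca | hca
    · linarith
    · have hst := tau_stability (W n) hc' hc'c hMc hca
      have h1 : lamV (W n) c' ≤ lamV (W n) c := lam_mono (W n) hc'c hMc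
      nlinarith
  -- Step 2: Tmix bound
  have hT : TmixV (W n) ε ≤ tauV (W n) c' + u / lamV (W n) c' := by
    apply Tmix_le (W n) (by positivity)
    refine le_trans (lap_upper_shift (W n) hc' hMc' (by linarith : (0:ℝ) < u)) ?_
    have he1 : Real.exp (tauV (W n) c' * lamV (W n) c' - u) ≤ Real.exp (-m - 1) :=
      Real.exp_le_exp.2 (by linarith)
    have he2 : Real.exp (-m - 1) = Real.exp (-m) * Real.exp (-1) := by
      rw [← Real.exp_add]; ring_nf
    have he3 : Real.exp (-m) ≤ ε / 4 := by
      have h1 : Real.exp (-m) ≤ Real.exp (-Real.log (4 / ε)) :=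
        Real.exp_le_exp.2 (by linarith)
      have h2 : Real.exp (-Real.log (4 / ε)) = ε / 4 := by
        rw [Real.exp_neg, Real.exp_log (by positivity), inv_div]
      linarith
    have he4 : Real.exp (-(1:ℝ)) ≤ 1/2 := by
      rw [Real.exp_neg]
      rw [inv_le_comm₀ (Real.exp_pos _) (by norm_num)]
      have := Real.add_one_le_exp (1:ℝ)
      linarith
    have he5 : (1:ℝ)/2 ≤ 1 - Real.exp (-u) := by
      have : Real.exp (-u) ≤ Real.exp (-(1:ℝ)) := Real.exp_le_exp.2 (by linarith)
      linarith
    have hnum : Real.exp (tauV (W n) c' * lamV (W n) c' - u) ≤ ε / 8 := by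
      have := mul_le_mul he3 he4 (Real.exp_pos _).le (by linarith)
      nlinarith [Real.exp_pos (-m)]
    have hden : (0:ℝ) < 1 - Real.exp (-u) := by linarith
    have : Real.exp (tauV (W n) c' * lamV (W n) c' - u) / (1 - Real.exp (-u))
        ≤ (ε/8) / (1/2) := by
      apply div_le_div₀ (by positivity) hnum (by norm_num) he5
    have h8 : (ε/8) / ((1:ℝ)/2) = ε/4 := by ring
    linarith
  -- Step 3: contradiction
  have hmul : TmixV (W n) ε * lamV (W n) c'
      ≤ (tauV (W n) c' + u / lamV (W n) c') * lamV (W n) c' :=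
    mul_le_mul_of_nonneg_right hT hlam'.le
  have hid : (tauV (W n) c' + u / lamV (W n) c') * lamV (W n) c'
      = tauV (W n) c' * lamV (W n) c' + u := by
    field_simp
  rw [hid] at hmul
  linarith

include hdiv in
lemma imp41 (h : ∀ c > (0 : ℝ), Tendsto (fun n => tauV (W n) c * lamV (W n) c) atTop atTop) :
    LapCutoff W := by
  refine ⟨fun n => tauV (W n) 1, ?_, ?_, ?_⟩
  · filter_upwards [hmass hdiv 1] with n hn
    exact tau_pos (W n) one_pos hn
  · intro a ha
    refine tendsto_order.2 ⟨fun b hb => ?_, fun ε hε => ?_⟩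
    · exact Eventually.of_forall fun n => lt_of_lt_of_le hb (lap_nonneg (W n))
    · set c : ℝ := min (ε/2) 1 with hcdef
      have hc : 0 < c := by rw [hcdef]; positivity
      have hc1 : c ≤ 1 := min_le_right _ _
      have hcε : c ≤ ε/2 := min_le_left _ _
      set b1 : ℝ := (a-1)/2 with hb1
      set b2 : ℝ := (a-1)^2/2 with hb2
      have hb1pos : 0 < b1 := by rw [hb1]; linarith
      have hb2pos : 0 < b2 := by rw [hb2]; nlinarith
      set thr : ℝ := max (Real.log 2 + 1) (max (Real.log 2 / b2) (Real.log (8/ε) / b1))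
      filter_upwards [hmass hdiv 1, tendsto_atTop.1 (h c hc) thr] with n hM hP
      have hMc : c < (W n (Ioi 0)).toReal := lt_of_le_of_lt hc1 hM
      set P : ℝ := tauV (W n) c * lamV (W n) c with hPdef
      have hlog2 : Real.log (1 + 1) < P := by
        have h1 : Real.log 2 + 1 ≤ thr := le_max_left _ _
        norm_num
        linarith
      have hst : tauV (W n) c ≤ tauV (W n) 1 := tau_stability (W n) hc hc1 hM hlog2
      have htauc : 0 < tauV (W n) c := tau_pos (W n) hc hMc
      have hmono : lap (W n) (a * tauV (W n) 1) ≤ lap (W n) (a * tauV (W n) c) :=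
        lap_mono (W n) (by nlinarith) (by nlinarith)
      have hup := lap_upper_mul (W n) hc hMc ha
      have he2 : Real.exp (-b2 * P) ≤ 1/2 := by
        have h1 : Real.log 2 / b2 ≤ thr := le_trans (le_max_left _ _) (le_max_right _ _)
        have h2 : Real.log 2 ≤ b2 * P := by
          rw [div_le_iff₀ hb2pos] at h1
          nlinarith
        have : Real.exp (-b2 * P) ≤ Real.exp (-Real.log 2) := Real.exp_le_exp.2 (by linarith)
        rw [Real.exp_neg, Real.exp_log (by norm_num : (0:ℝ) < 2)] at this
        linarith
      have he1 : Real.exp (-b1 * P) ≤ ε/8 := by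
        have h1 : Real.log (8/ε) / b1 ≤ thr :=
          le_trans (le_max_right _ _) (le_max_right _ _)
        have h2 : Real.log (8/ε) ≤ b1 * P := by
          rw [div_le_iff₀ hb1pos] at h1
          nlinarith
        have : Real.exp (-b1 * P) ≤ Real.exp (-Real.log (8/ε)) := Real.exp_le_exp.2 (by linarith)
        rw [Real.exp_neg, Real.exp_log (by positivity)] at this
        rw [inv_div] at this
        linarith
      have hden : (1:ℝ)/2 ≤ 1 - Real.exp (-b2 * P) := by linarith
      have hfrac : Real.exp (-b1 * P) / (1 - Real.exp (-b2 * P)) ≤ (ε/8)/(1/2) :=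
        div_le_div₀ (by positivity) he1 (by norm_num) hden
      have h8 : (ε/8) / ((1:ℝ)/2) = ε/4 := by ring
      calc lap (W n) (a * tauV (W n) 1) ≤ lap (W n) (a * tauV (W n) c) := hmono
        _ ≤ c + Real.exp (-b1 * P) / (1 - Real.exp (-b2 * P)) := hup
        _ ≤ ε/2 + ε/4 := by linarith
        _ < ε := by linarith
  · intro a ⟨ha0, ha1⟩
    have hd : 0 < (1-a)/2 := by linarith
    have hbase : Tendsto (fun n => Real.exp (((1-a)/2) * (tauV (W n) 1 * lamV (W n) 1)) - 1)
        atTop atTop := by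
      refine tendsto_atTop_add_const_right _ (-1) ?_
      exact Real.tendsto_exp_atTop.comp ((h 1 one_pos).const_mul_atTop hd)
    refine tendsto_atTop_mono' atTop ?_ hbase
    filter_upwards [hmass hdiv 1] with n hM
    exact lap_lower_tau (W n) one_pos hM ha0 ha1

include hdiv in
lemma imp45 (h : ∀ c > (0 : ℝ), Tendsto (fun n => tauV (W n) c * lamV (W n) c) atTop atTop) :
    ∀ c' > (0 : ℝ), ∀ c > (0 : ℝ),
      Tendsto (fun n => tauV (W n) c' * lamV (W n) c) atTop atTop := by
  intro c' hc' c hc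
  refine tendsto_atTop_mono' atTop ?_ (h c hc)
  rcases le_or_gt c' c with hle | hlt
  · filter_upwards [hmass hdiv c] with n hM
    have := tau_anti (W n) hc' hle hM
    have hlam : 0 < lamV (W n) c := lam_pos (W n) hc hM
    nlinarith
  · filter_upwards [hmass hdiv c', tendsto_atTop.1 (h c hc) (Real.log (1 + c') + 1)]
      with n hM hP
    have hlogpos : 0 < Real.log (1 + c') := Real.log_pos (by linarith)
    have hst : tauV (W n) c ≤ tauV (W n) c' :=
      tau_stability (W n) hc hlt.le hM (by linarith)
    have hlam : 0 < lamV (W n) c := lam_pos (W n) hc (lt_trans hlt hM)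
    nlinarith

include hdiv in
lemma imp64 (h : ∃ c' > (0 : ℝ), ∀ c > (0 : ℝ),
      Tendsto (fun n => tauV (W n) c' * lamV (W n) c) atTop atTop) :
    ∀ c > (0 : ℝ), Tendsto (fun n => tauV (W n) c * lamV (W n) c) atTop atTop := by
  obtain ⟨c₀, hc₀, hyp⟩ := h
  intro c hc
  refine tendsto_atTop_mono' atTop ?_ (hyp c hc)
  rcases le_or_gt c c₀ with hle | hlt
  · filter_upwards [hmass hdiv c₀, hmass hdiv c] with n hM hMc
    have := tau_anti (W n) hc hle hM
    have hlam : 0 < lamV (W n) c := lam_pos (W n) hc hMc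
    nlinarith
  · filter_upwards [hmass hdiv c, tendsto_atTop.1 (hyp c₀ hc₀) (Real.log (1 + c) + 1)]
      with n hM hP
    have hlogpos : 0 < Real.log (1 + c) := Real.log_pos (by linarith)
    have hst : tauV (W n) c₀ ≤ tauV (W n) c :=
      tau_stability (W n) hc₀ hlt.le hM (by linarith)
    have hlam : 0 < lamV (W n) c := lam_pos (W n) hc hM
    nlinarith

end Seq

theorem stmt_2 (V : ℕ → Measure ℝ) [∀ n, IsFiniteMeasure (V n)]
    (hsupp : ∀ n, V n (Iic 0) = 0)
    (hdiv : Tendsto (fun n => lap (V n) 0) atTop atTop) :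
    List.TFAE
      [ LapCutoff V,
        ∀ ε > (0 : ℝ), ∀ c > (0 : ℝ),
          Tendsto (fun n => TmixV (V n) ε * lamV (V n) c) atTop atTop,
        ∃ ε > (0 : ℝ), ∀ c > (0 : ℝ),
          Tendsto (fun n => TmixV (V n) ε * lamV (V n) c) atTop atTop,
        ∀ c > (0 : ℝ),
          Tendsto (fun n => tauV (V n) c * lamV (V n) c) atTop atTop,
        ∀ c' > (0 : ℝ), ∀ c > (0 : ℝ),
          Tendsto (fun n => tauV (V n) c' * lamV (V n) c) atTop atTop,
        ∃ c' > (0 : ℝ), ∀ c > (0 : ℝ),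
          Tendsto (fun n => tauV (V n) c' * lamV (V n) c) atTop atTop ] := by
  tfae_have 1 → 2 := imp12 hdiv
  tfae_have 2 → 3 := imp23
  tfae_have 3 → 4 := imp34 hdiv
  tfae_have 4 → 1 := imp41 hdiv
  tfae_have 4 → 5 := imp45 hdiv
  tfae_have 5 → 6 := imp56
  tfae_have 6 → 4 := imp64 hdiv
  tfae_finish
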